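/- arXiv:2304.09743 — 3 statements merged into one kernel-verified Lean document; each statement's English description precedes it below -/
import Mathlib

section
/- Let U be a finite set, let z be a nondegenerate nonnegative weight vector, let S ⊆ U be nonempty and T ⊆ U. Then the pseudo-derivative is nonnegative and bounds the derivative from above: max(∂f(S)/∂z_T, 0) ≤ ∂̂f(S)/∂̂z_T. -/
open Finset

variable {α : Type*} [Fintype α] [DecidableEq α]

/-- `E` crosses `S` if both `S ∩ E` and `S \ E` are nonempty. -/
def Crosses (E S : Finset α) : Prop := (S ∩ E).Nonempty ∧ (S \ E).Nonempty

instance (E S : Finset α) : Decidable (Crosses E S) := by unfold Crosses; infer_instance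

/-- The family of subsets of the ground set crossing `S`. -/
def crossers (S : Finset α) : Finset (Finset α) := univ.filter (fun E => Crosses E S)

/-- `ℓ(p)`: total weight of the sets containing `p`. -/
def ell (z : Finset α → ℝ) (p : α) : ℝ := ∑ E ∈ univ.filter (fun E => p ∈ E), z E

lemma card_sdiff_lt_of_mem_crossers {E S : Finset α} (h : E ∈ crossers S) :
    (S \ E).card < S.card := by
  have h' : Crosses E S := (mem_filter.mp h).2
  obtain ⟨⟨x, hx⟩, -⟩ := h'
  refine card_lt_card ((ssubset_iff_of_subset sdiff_subset).mpr ?_)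
  exact ⟨x, (mem_inter.mp hx).1, fun hmem => (mem_sdiff.mp hmem).2 (mem_inter.mp hx).2⟩

/-- The function `f(S)` from the Closest Point Process. -/
noncomputable def fval (z : Finset α → ℝ) (S : Finset α) : ℝ :=
  if S.card ≤ 1 then ∑ p ∈ S, ell z p
  else if 0 < ∑ E ∈ crossers S, z E then
    (∑ E ∈ (crossers S).attach, z E.1 * fval z (S \ E.1)) / (∑ E ∈ crossers S, z E)
  else 0
termination_by S.card
decreasing_by exact card_sdiff_lt_of_mem_crossers E.2

/-- A weight vector is nondegenerate if every `S` with `|S| ≥ 2` has positive crossing weight. -/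
def Nondeg (z : Finset α → ℝ) : Prop :=
  ∀ S : Finset α, 2 ≤ S.card → 0 < ∑ E ∈ crossers S, z E

/-- The partial derivative `∂f(S)/∂z_T`. -/
noncomputable def pderivf (S T : Finset α) (z : Finset α → ℝ) : ℝ :=
  fderiv ℝ (fun w : Finset α → ℝ => fval w S) z (Pi.single T 1)

/-- The pseudo-derivative `∂̂f(S)/∂̂z_T`. -/
noncomputable def pdhat (z : Finset α → ℝ) (S T : Finset α) : ℝ :=
  if S ⊆ T then 1
  else if S ∩ T = ∅ then 0
  else (∑ E ∈ (crossers S).attach, z E.1 * pdhat z (S \ E.1) T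
        + fval z (S \ T) - ∑ E ∈ univ.filter (fun E => S ⊆ E), z E)
       / (∑ E ∈ crossers S, z E)
termination_by S.card
decreasing_by exact card_sdiff_lt_of_mem_crossers E.2

/-- The `m`-th harmonic number. -/
noncomputable def harm (m : ℕ) : ℝ := ∑ j ∈ Finset.range m, 1 / ((j : ℝ) + 1)

section Aux

variable {α : Type*} [Fintype α] [DecidableEq α]

lemma mem_crossers' {E S : Finset α} (h : E ∈ crossers S) : Crosses E S := by
  simpa [crossers] using h

lemma fval_small' (z : Finset α → ℝ) {S : Finset α} (h1 : S.card ≤ 1) :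
    fval z S = ∑ p ∈ S, ell z p := by rw [fval, if_pos h1]

lemma fval_big' (z : Finset α → ℝ) {S : Finset α} (h1 : ¬ S.card ≤ 1)
    (hD : 0 < ∑ E ∈ crossers S, z E) :
    fval z S = (∑ E ∈ crossers S, z E * fval z (S \ E)) / (∑ E ∈ crossers S, z E) := by
  rw [fval, if_neg h1, if_pos hD, Finset.sum_attach (crossers S) (fun E => z E * fval z (S \ E))]

lemma le_fval (z : Finset α → ℝ) (hz : ∀ E : Finset α, 0 ≤ z E) (hnd : Nondeg z) :
    ∀ (n : ℕ) (S : Finset α), S.card ≤ n → S.Nonempty →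
      ∀ c : ℝ, (∀ p ∈ S, c ≤ ell z p) → c ≤ fval z S := by
  intro n
  induction n with
  | zero =>
    intro S hn hS c _
    exact absurd (Finset.card_eq_zero.mp (Nat.le_zero.mp hn)) hS.ne_empty
  | succ n ih =>
    intro S hn hS c hc
    by_cases h1 : S.card ≤ 1
    · obtain ⟨q, hq⟩ := Finset.card_eq_one.mp (le_antisymm h1 hS.card_pos)
      rw [fval_small' z h1, hq, Finset.sum_singleton]
      exact hc q (by simp [hq])
    · have h2 : 2 ≤ S.card := by omega
      have hD := hnd S h2
      rw [fval_big' z h1 hD, le_div_iff₀ hD]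
      calc c * ∑ E ∈ crossers S, z E = ∑ E ∈ crossers S, z E * c := by
            rw [Finset.mul_sum]; exact Finset.sum_congr rfl fun E _ => mul_comm _ _
        _ ≤ ∑ E ∈ crossers S, z E * fval z (S \ E) := by
            refine Finset.sum_le_sum fun E hE => ?_
            have hlt := card_sdiff_lt_of_mem_crossers hE
            refine mul_le_mul_of_nonneg_left ?_ (hz E)
            exact ih (S \ E) (by omega) (mem_crossers' hE).2 c
              (fun p hp => hc p (Finset.sdiff_subset hp))

lemma supw_le_fval (z : Finset α → ℝ) (hz : ∀ E : Finset α, 0 ≤ z E) (hnd : Nondeg z)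
    {S W : Finset α} (hW : W.Nonempty) (hWS : W ⊆ S) :
    (∑ E ∈ univ.filter (fun E => S ⊆ E), z E) ≤ fval z W := by
  refine le_fval z hz hnd W.card W le_rfl hW _ fun p hp => ?_
  refine Finset.sum_le_sum_of_subset_of_nonneg ?_ (fun E _ _ => hz E)
  intro E hE
  simp only [Finset.mem_filter, Finset.mem_univ, true_and] at hE ⊢
  exact hE (hWS hp)

lemma pdhat_nonneg (z : Finset α → ℝ) (hz : ∀ E : Finset α, 0 ≤ z E) (hnd : Nondeg z) :
    ∀ (n : ℕ) (S : Finset α), S.card ≤ n → S.Nonempty → ∀ T : Finset α, 0 ≤ pdhat z S T := by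
  intro n
  induction n with
  | zero =>
    intro S hn hS
    exact absurd (Finset.card_eq_zero.mp (Nat.le_zero.mp hn)) hS.ne_empty
  | succ n ih =>
    intro S hn hS T
    rw [pdhat]
    split_ifs with hST hIT
    · exact zero_le_one
    · exact le_rfl
    · have hint : (S ∩ T).Nonempty := Finset.nonempty_iff_ne_empty.mpr hIT
      have hsd : (S \ T).Nonempty := by
        rw [Finset.sdiff_nonempty]; exact hST
      have h2 : 2 ≤ S.card := by
        have := Finset.card_inter_add_card_sdiff S T
        have h1 := hint.card_pos
        have h2 := hsd.card_pos
        omega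
      have hD := hnd S h2
      refine div_nonneg ?_ hD.le
      have hA : 0 ≤ ∑ E ∈ (crossers S).attach, z E.1 * pdhat z (S \ E.1) T := by
        refine Finset.sum_nonneg fun E _ => ?_
        have hlt := card_sdiff_lt_of_mem_crossers E.2
        exact mul_nonneg (hz E.1) (ih (S \ E.1) (by omega) (mem_crossers' E.2).2 T)
      have hB := supw_le_fval z hz hnd hsd (Finset.sdiff_subset (t := T))
      linarith

lemma key_deriv (z : Finset α → ℝ) (hz : ∀ E : Finset α, 0 ≤ z E) (hnd : Nondeg z) :
    ∀ (n : ℕ) (S : Finset α), S.card ≤ n → S.Nonempty →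
      ∃ L : (Finset α → ℝ) →L[ℝ] ℝ, HasFDerivAt (fun w => fval w S) L z ∧
        ∀ T : Finset α, L (Pi.single T 1) ≤ pdhat z S T := by
  intro n
  induction n with
  | zero =>
    intro S hn hS
    exact absurd (Finset.card_eq_zero.mp (Nat.le_zero.mp hn)) hS.ne_empty
  | succ n ih =>
    intro S hn hS
    by_cases h1 : S.card ≤ 1
    · -- singleton case: fval is linear
      obtain ⟨q, hq⟩ := Finset.card_eq_one.mp (le_antisymm h1 hS.card_pos)
      subst hq
      refine ⟨∑ E ∈ univ.filter (fun E => q ∈ E),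
        (ContinuousLinearMap.proj E : ((Finset α → ℝ) →L[ℝ] ℝ)), ?_, ?_⟩
      · have : (fun w : Finset α → ℝ => fval w {q}) =
            fun w => ∑ E ∈ univ.filter (fun E => q ∈ E), w E := by
          funext w
          rw [fval_small' w h1, Finset.sum_singleton, ell]
        rw [this]
        exact HasFDerivAt.fun_sum fun E _ =>
          (ContinuousLinearMap.proj E : ((Finset α → ℝ) →L[ℝ] ℝ)).hasFDerivAt
      · intro T
        have hLs : (∑ E ∈ univ.filter (fun E => q ∈ E),
            (ContinuousLinearMap.proj E : ((Finset α → ℝ) →L[ℝ] ℝ))) (Pi.single T 1)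
            = if q ∈ T then (1 : ℝ) else 0 := by
          rw [ContinuousLinearMap.sum_apply]
          simp only [ContinuousLinearMap.proj_apply, Pi.single_apply]
          rw [Finset.sum_ite_eq' (univ.filter (fun E => q ∈ E)) T (fun _ => (1:ℝ))]
          simp
        rw [hLs, pdhat]
        by_cases hqT : q ∈ T
        · rw [if_pos hqT, if_pos (Finset.singleton_subset_iff.mpr hqT)]
        · rw [if_neg hqT, if_neg (by simpa using hqT),
            if_pos (by simp [Finset.singleton_inter_of_notMem hqT])]
    · -- main case
      have h2 : 2 ≤ S.card := by omega
      have hD := hnd S h2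
      set C := crossers S with hC
      set Dz : ℝ := ∑ E ∈ C, z E with hDz
      have hIH : ∀ E : Finset α, ∃ L : (Finset α → ℝ) →L[ℝ] ℝ, E ∈ C →
          HasFDerivAt (fun w => fval w (S \ E)) L z ∧
          ∀ T : Finset α, L (Pi.single T 1) ≤ pdhat z (S \ E) T := by
        intro E
        by_cases hE : E ∈ C
        · have hlt := card_sdiff_lt_of_mem_crossers hE
          obtain ⟨L, hL1, hL2⟩ := ih (S \ E) (by omega) (mem_crossers' hE).2
          exact ⟨L, fun _ => ⟨hL1, hL2⟩⟩
        · exact ⟨0, fun h => absurd h hE⟩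
      choose Lm hLm using hIH
      set N' : (Finset α → ℝ) →L[ℝ] ℝ :=
        ∑ E ∈ C, (z E • Lm E + fval z (S \ E) • (ContinuousLinearMap.proj E)) with hN'def
      set D' : (Finset α → ℝ) →L[ℝ] ℝ := ∑ E ∈ C, (ContinuousLinearMap.proj E) with hD'def
      set iD' : (Finset α → ℝ) →L[ℝ] ℝ :=
        ((ContinuousLinearMap.smulRight (1 : ℝ →L[ℝ] ℝ) (-(Dz ^ 2)⁻¹)).comp D') with hiD'def
      set Nz : ℝ := ∑ E ∈ C, z E * fval z (S \ E) with hNz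
      set L : (Finset α → ℝ) →L[ℝ] ℝ := Nz • iD' + Dz⁻¹ • N' with hLdef
      have hNder : HasFDerivAt (fun w => ∑ E ∈ C, w E * fval w (S \ E)) N' z := by
        refine HasFDerivAt.fun_sum fun E hE => ?_
        have := (ContinuousLinearMap.proj E :
          ((Finset α → ℝ) →L[ℝ] ℝ)).hasFDerivAt (x := z)
        exact this.mul (hLm E hE).1
      have hDder : HasFDerivAt (fun w : Finset α → ℝ => ∑ E ∈ C, w E) D' z :=
        HasFDerivAt.fun_sum fun E _ =>
          (ContinuousLinearMap.proj E : ((Finset α → ℝ) →L[ℝ] ℝ)).hasFDerivAt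
      have hDcont : Continuous (fun w : Finset α → ℝ => ∑ E ∈ C, w E) :=
        continuous_finset_sum _ fun E _ => continuous_apply E
      have hinv : HasFDerivAt (fun w : Finset α → ℝ => (∑ E ∈ C, w E)⁻¹) iD' z :=
        (hasFDerivAt_inv hD.ne').comp z hDder
      have hfull : HasFDerivAt
          (fun w : Finset α → ℝ => (∑ E ∈ C, w E * fval w (S \ E)) * (∑ E ∈ C, w E)⁻¹)
          L z := by
        have := hNder.mul hinv
        -- this : derivative is  Nz • iD' + (Dz)⁻¹ • N'
        exact this
      have hev : ∀ᶠ w in nhds z, 0 < ∑ E ∈ C, w E :=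
        (hDcont.tendsto z).eventually (eventually_gt_nhds hD)
      have heq : (fun w => fval w S) =ᶠ[nhds z]
          (fun w : Finset α → ℝ =>
            (∑ E ∈ C, w E * fval w (S \ E)) * (∑ E ∈ C, w E)⁻¹) := by
        filter_upwards [hev] with w hw
        rw [fval_big' w h1 hw, div_eq_mul_inv]
      refine ⟨L, hfull.congr_of_eventuallyEq heq, ?_⟩
      intro T
      set s : Finset α → ℝ := Pi.single T 1 with hs
      have hD's : D' s = if T ∈ C then (1:ℝ) else 0 := by
        rw [hD'def, ContinuousLinearMap.sum_apply]
        simp only [ContinuousLinearMap.proj_apply, hs, Pi.single_apply]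
        rw [Finset.sum_ite_eq' C T (fun _ => (1:ℝ))]
      have hN's : N' s = (∑ E ∈ C, z E * Lm E s) +
          (if T ∈ C then fval z (S \ T) else 0) := by
        rw [hN'def, ContinuousLinearMap.sum_apply]
        have hterm : ∀ E ∈ C, ((z E • Lm E + fval z (S \ E) •
            (ContinuousLinearMap.proj E : ((Finset α → ℝ) →L[ℝ] ℝ))) s)
            = z E * Lm E s + (if E = T then fval z (S \ E) else 0) := by
          intro E _
          simp only [ContinuousLinearMap.add_apply, ContinuousLinearMap.smul_apply,
            ContinuousLinearMap.proj_apply, smul_eq_mul, hs, Pi.single_apply,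
            mul_ite, mul_one, mul_zero]
        rw [Finset.sum_congr rfl hterm, Finset.sum_add_distrib,
          Finset.sum_ite_eq' C T (fun E => fval z (S \ E))]
      have hLs : L s = Nz * (-(Dz ^ 2)⁻¹ * D' s) + Dz⁻¹ * N' s := by
        rw [hLdef, ContinuousLinearMap.add_apply, ContinuousLinearMap.smul_apply,
          ContinuousLinearMap.smul_apply, hiD'def, ContinuousLinearMap.comp_apply,
          ContinuousLinearMap.smulRight_apply, ContinuousLinearMap.one_apply]
        simp only [smul_eq_mul]
        ring
      set A : ℝ := ∑ E ∈ C, z E * Lm E s with hA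
      by_cases hST : S ⊆ T
      · -- pdhat = 1
        have hTC : T ∉ C := by
          intro h
          have := (mem_crossers' h).2
          rw [Finset.sdiff_eq_empty_iff_subset.mpr hST] at this
          exact this.ne_empty rfl
        have hAle : A ≤ Dz := by
          rw [hA, hDz]
          refine Finset.sum_le_sum fun E hE => ?_
          have h1' := (hLm E hE).2 T
          rw [pdhat, if_pos ((Finset.sdiff_subset).trans hST)] at h1'
          calc z E * Lm E s ≤ z E * 1 := mul_le_mul_of_nonneg_left h1' (hz E)
            _ = z E := mul_one _
        rw [hLs, hD's, if_neg hTC, hN's, if_neg hTC, pdhat, if_pos hST]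
        have : Nz * (-(Dz ^ 2)⁻¹ * 0) + Dz⁻¹ * (A + 0) = Dz⁻¹ * A := by ring
        rw [this]
        calc Dz⁻¹ * A ≤ Dz⁻¹ * Dz := mul_le_mul_of_nonneg_left hAle (inv_nonneg.mpr hD.le)
          _ = 1 := inv_mul_cancel₀ hD.ne'
      · by_cases hIT : S ∩ T = ∅
        · -- pdhat = 0
          have hTC : T ∉ C := by
            intro h
            have := (mem_crossers' h).1
            rw [hIT] at this
            exact this.ne_empty rfl
          have hAle : A ≤ 0 := by
            rw [hA]
            refine Finset.sum_nonpos fun E hE => ?_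
            have h1' := (hLm E hE).2 T
            have hdisj : (S \ E) ∩ T = ∅ := by
              rw [← Finset.subset_empty, ← hIT]
              exact Finset.inter_subset_inter (Finset.sdiff_subset) le_rfl
            have hnsub : ¬ (S \ E) ⊆ T := by
              intro hsub
              obtain ⟨p, hp⟩ := (mem_crossers' hE).2
              have : p ∈ (S \ E) ∩ T := Finset.mem_inter.mpr ⟨hp, hsub hp⟩
              rw [hdisj] at this
              exact absurd this (Finset.notMem_empty p)
            rw [pdhat, if_neg hnsub, if_pos hdisj] at h1'
            calc z E * Lm E s ≤ z E * 0 := mul_le_mul_of_nonneg_left h1' (hz E)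
              _ = 0 := mul_zero _
          rw [hLs, hD's, if_neg hTC, hN's, if_neg hTC, pdhat, if_neg hST, if_pos hIT]
          have : Nz * (-(Dz ^ 2)⁻¹ * 0) + Dz⁻¹ * (A + 0) = Dz⁻¹ * A := by ring
          rw [this]
          exact mul_nonpos_of_nonneg_of_nonpos (inv_nonneg.mpr hD.le) hAle
        · -- T crosses S
          have hTC : T ∈ C := by
            rw [hC, crossers, Finset.mem_filter]
            exact ⟨Finset.mem_univ T,
              Finset.nonempty_iff_ne_empty.mpr hIT, Finset.sdiff_nonempty.mpr hST⟩
          have hNzf : Nz = fval z S * Dz := by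
            rw [fval_big' z h1 hD, ← hDz, ← hNz, div_mul_cancel₀ _ hD.ne']
          have hfS : (∑ E ∈ univ.filter (fun E => S ⊆ E), z E) ≤ fval z S :=
            supw_le_fval z hz hnd hS le_rfl
          have hAB : A ≤ ∑ E ∈ C, z E * pdhat z (S \ E) T := by
            rw [hA]
            exact Finset.sum_le_sum fun E hE =>
              mul_le_mul_of_nonneg_left ((hLm E hE).2 T) (hz E)
          rw [hLs, hD's, if_pos hTC, hN's, if_pos hTC, pdhat, if_neg hST, if_neg hIT]
          rw [Finset.sum_attach C (fun E => z E * pdhat z (S \ E) T), ← hC, ← hDz]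
          have hLHS : Nz * (-(Dz ^ 2)⁻¹ * 1) + Dz⁻¹ * (A + fval z (S \ T))
              = (A + fval z (S \ T) - fval z S) / Dz := by
            rw [hNzf]
            field_simp
            ring
          rw [hLHS]
          rw [div_le_div_iff_of_pos_right hD]
          linarith

end Aux


/-- the pseudo-derivative is nonnegative and bounds the derivative
from above. -/
theorem stmt7 {α : Type*} [Fintype α] [DecidableEq α]
    (z : Finset α → ℝ) (hz : ∀ E : Finset α, 0 ≤ z E) (hnd : Nondeg z)
    (S T : Finset α) (hS : S.Nonempty) :
    max (pderivf S T z) 0 ≤ pdhat z S T := by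
  obtain ⟨L, hL1, hL2⟩ := key_deriv z hz hnd S.card S le_rfl hS
  have hpd : pderivf S T z = L (Pi.single T 1) := by
    rw [pderivf, hL1.fderiv]
  rw [hpd]
  exact max_le (hL2 T) (pdhat_nonneg z hz hnd S.card S le_rfl hS T)
end

section
/- Let U be a finite set and let z be a nondegenerate nonnegative weight vector. Then for every nonempty S ⊆ U, min_{a∈S} ℓ(a) ≤ f(S) ≤ max_{b∈S} ℓ(b). -/
open Finset

variable {α : Type*} [Fintype α] [DecidableEq α]

lemma crossers_sdiff_nonempty {E S : Finset α} (h : E ∈ crossers S) :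
    (S \ E).Nonempty := by
  have h' : Crosses E S := (mem_filter.mp h).2
  exact h'.2

lemma stmt10_aux (z : Finset α → ℝ) (hz : ∀ E : Finset α, 0 ≤ z E) (hnd : Nondeg z) :
    ∀ n (S : Finset α) (hS : S.Nonempty), S.card ≤ n →
      S.inf' hS (ell z) ≤ fval z S ∧ fval z S ≤ S.sup' hS (ell z) := by
  intro n
  induction n with
  | zero => intro S hS h0; simp [Finset.card_eq_zero.mp (Nat.le_zero.mp h0)] at hS
  | succ n ih =>
    intro S hS hcard
    by_cases h1 : S.card ≤ 1
    · have h1' : S.card = 1 := le_antisymm h1 (Finset.card_pos.mpr hS)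
      obtain ⟨p, rfl⟩ := Finset.card_eq_one.mp h1'
      rw [fval]
      simp
    · have h2 : 2 ≤ S.card := by omega
      have hpos := hnd S h2
      rw [fval, if_neg h1, if_pos hpos]
      have key : ∀ E ∈ (crossers S).attach,
          S.inf' hS (ell z) ≤ fval z (S \ E.1) ∧
          fval z (S \ E.1) ≤ S.sup' hS (ell z) := by
        intro E _
        have hne : (S \ E.1).Nonempty := crossers_sdiff_nonempty E.2
        have hlt := card_sdiff_lt_of_mem_crossers E.2
        obtain ⟨hi, hs⟩ := ih (S \ E.1) hne (by omega)
        constructor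
        · refine le_trans ?_ hi
          exact Finset.le_inf' _ _ (fun b hb => Finset.inf'_le _ (Finset.mem_sdiff.mp hb).1)
        · refine le_trans hs ?_
          exact Finset.sup'_le _ _ (fun b hb => Finset.le_sup' _ (Finset.mem_sdiff.mp hb).1)
      constructor
      · rw [le_div_iff₀ hpos]
        calc S.inf' hS (ell z) * ∑ E ∈ crossers S, z E
            = ∑ E ∈ (crossers S).attach, z E.1 * S.inf' hS (ell z) := by
              rw [← Finset.sum_attach (crossers S) z, Finset.mul_sum]
              exact Finset.sum_congr rfl (fun E _ => mul_comm _ _)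
          _ ≤ ∑ E ∈ (crossers S).attach, z E.1 * fval z (S \ E.1) :=
              Finset.sum_le_sum (fun E hE =>
                mul_le_mul_of_nonneg_left (key E hE).1 (hz E.1))
      · rw [div_le_iff₀ hpos]
        calc ∑ E ∈ (crossers S).attach, z E.1 * fval z (S \ E.1)
            ≤ ∑ E ∈ (crossers S).attach, z E.1 * S.sup' hS (ell z) :=
              Finset.sum_le_sum (fun E hE =>
                mul_le_mul_of_nonneg_left (key E hE).2 (hz E.1))
          _ = S.sup' hS (ell z) * ∑ E ∈ crossers S, z E := by
              rw [← Finset.sum_attach (crossers S) z, Finset.mul_sum]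
              exact Finset.sum_congr rfl (fun E _ => mul_comm _ _)

/-- `f(S)` lies between the minimum and maximum norm of points of `S`. -/
theorem stmt10 {α : Type*} [Fintype α] [DecidableEq α]
    (z : Finset α → ℝ) (hz : ∀ E : Finset α, 0 ≤ z E) (hnd : Nondeg z)
    (S : Finset α) (hS : S.Nonempty) :
    S.inf' hS (ell z) ≤ fval z S ∧ fval z S ≤ S.sup' hS (ell z) := by
  exact stmt10_aux z hz hnd S.card S hS le_rfl
end

section
/- Let U be a finite set, let z be a nondegenerate nonnegative weight vector, let S' ⊆ U, and for t ≥ 0 define the lifted weight vector z(t) by z(t)_{{p}} := z_{{p}} + t for every p ∈ S' and z(t)_E := z_E for all other E ⊆ U; write f_t(S) for the value of f(S) at z(t). Then for every nonempty S ⊆ U: (1) if S ∩ S' = ∅ then (d/dt) f_t(S)|_{t=0} = 0; (2) if S = {p} with p ∈ S' then (d/dt) f_t(S)|_{t=0} = 1; and (3) if every point of S ∩ S' has minimum norm among the points of S (i.e., ℓ(p) ≤ ℓ(q) for all p ∈ S ∩ S' and q ∈ S), then (d/dt) f_t(S)|_{t=0} ≥ 0. -/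
open Finset

variable {α : Type*} [Fintype α] [DecidableEq α]

/-- The lifted weight vector `z(t)`: the weight of each singleton `{p}`, `p ∈ S'`,
is increased by `t`; all other weights are unchanged. -/
noncomputable def zlift (z : Finset α → ℝ) (S' : Finset α) (t : ℝ) : Finset α → ℝ :=
  fun E => if E.card = 1 ∧ E ⊆ S' then z E + t else z E

-- basic lemmas test
section Basics
variable {α : Type*} [Fintype α] [DecidableEq α]

lemma mem_crossers {E S : Finset α} :
    E ∈ crossers S ↔ (S ∩ E).Nonempty ∧ (S \ E).Nonempty := by
  rw [crossers, mem_filter]; simp [Crosses]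

lemma crossers_singleton (p : α) : crossers ({p} : Finset α) = ∅ := by
  ext E
  simp only [mem_crossers, Finset.notMem_empty, iff_false, not_and]
  rintro ⟨a, ha⟩ ⟨b, hb⟩
  simp only [Finset.mem_inter, Finset.mem_sdiff, Finset.mem_singleton] at ha hb
  exact hb.2 (hb.1 ▸ (ha.1 ▸ ha.2))

lemma fval_of_card_le_one {z : Finset α → ℝ} {S : Finset α} (h : S.card ≤ 1) :
    fval z S = ∑ p ∈ S, ell z p := by
  rw [fval, if_pos h]

lemma fval_singleton (z : Finset α → ℝ) (p : α) : fval z {p} = ell z p := by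
  rw [fval_of_card_le_one (by simp), Finset.sum_singleton]

lemma fval_of_pos {z : Finset α → ℝ} {S : Finset α} (h2 : 2 ≤ S.card)
    (hD : 0 < ∑ E ∈ crossers S, z E) :
    fval z S = (∑ E ∈ crossers S, z E * fval z (S \ E)) / (∑ E ∈ crossers S, z E) := by
  rw [fval, if_neg (by omega), if_pos hD,
    Finset.sum_attach (crossers S) (fun E => z E * fval z (S \ E))]

end Basics
section Congr
variable {α : Type*} [Fintype α] [DecidableEq α]

lemma fval_congr (z w : Finset α → ℝ) (S : Finset α)
    (h : ∀ E : Finset α, (E ∩ S).Nonempty → z E = w E) : fval z S = fval w S := by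
  by_cases hc : S.card ≤ 1
  · rw [fval_of_card_le_one hc, fval_of_card_le_one hc]
    refine Finset.sum_congr rfl (fun p hp => ?_)
    unfold ell
    refine Finset.sum_congr rfl (fun E hE => ?_)
    simp only [Finset.mem_filter] at hE
    exact h E ⟨p, Finset.mem_inter.mpr ⟨hE.2, hp⟩⟩
  · have hzw : ∀ E ∈ crossers S, z E = w E := by
      intro E hE
      obtain ⟨⟨a, ha⟩, -⟩ := mem_crossers.mp hE
      exact h E ⟨a, by rw [Finset.inter_comm]; exact ha⟩
    have hdd : (∑ E ∈ crossers S, z E) = ∑ E ∈ crossers S, w E :=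
      Finset.sum_congr rfl hzw
    rw [fval, fval, if_neg hc, if_neg hc, hdd]
    by_cases hpos : 0 < ∑ E ∈ crossers S, w E
    · rw [if_pos hpos, if_pos hpos]
      congr 1
      refine Finset.sum_congr rfl (fun E _ => ?_)
      have hrec : fval z (S \ E.1) = fval w (S \ E.1) :=
        fval_congr z w (S \ E.1) (fun F hF => h F (hF.mono (Finset.inter_subset_inter
          (le_refl F) Finset.sdiff_subset)))
      rw [hzw E.1 E.2, hrec]
    · rw [if_neg hpos, if_neg hpos]
termination_by S.card
decreasing_by exact card_sdiff_lt_of_mem_crossers E.2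

end Congr
section Ineq
variable {α : Type*} [Fintype α] [DecidableEq α]

lemma sum_crossers_eq {z : Finset α → ℝ} (hnd : Nondeg z) {T : Finset α} (hT : T.Nonempty) :
    ∑ E ∈ crossers T, z E * fval z (T \ E) = (∑ E ∈ crossers T, z E) * fval z T := by
  by_cases hc : T.card ≤ 1
  · obtain ⟨q, rfl⟩ := Finset.card_eq_one.mp (le_antisymm hc hT.card_pos)
    rw [crossers_singleton]
    simp
  · have hD := hnd T (by omega)
    rw [fval_of_pos (by omega) hD, mul_div_cancel₀ _ (ne_of_gt hD)]

lemma fval_ge {z : Finset α → ℝ} (hz : ∀ E, 0 ≤ z E) (hnd : Nondeg z) {c : ℝ}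
    {T : Finset α} (hT : T.Nonempty) (h : ∀ q ∈ T, c ≤ ell z q) : c ≤ fval z T := by
  by_cases hc : T.card ≤ 1
  · obtain ⟨q, rfl⟩ := Finset.card_eq_one.mp (le_antisymm hc hT.card_pos)
    rw [fval_singleton]
    exact h q (Finset.mem_singleton_self q)
  · have hD := hnd T (by omega)
    rw [fval_of_pos (by omega) hD, le_div_iff₀ hD]
    calc c * (∑ E ∈ crossers T, z E) = ∑ E ∈ crossers T, z E * c := by
          rw [Finset.mul_sum]; exact Finset.sum_congr rfl (fun _ _ => mul_comm _ _)
      _ ≤ ∑ E ∈ crossers T, z E * fval z (T \ E) := by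
          refine Finset.sum_le_sum (fun E hE => ?_)
          refine mul_le_mul_of_nonneg_left ?_ (hz E)
          exact fval_ge hz hnd (mem_crossers.mp hE).2
            (fun q hq => h q (Finset.mem_sdiff.mp hq).1)
termination_by T.card
decreasing_by exact card_sdiff_lt_of_mem_crossers hE

end Ineq
section LemA
variable {α : Type*} [Fintype α] [DecidableEq α]

omit [Fintype α] in
lemma crosses_of_crosses_sdiff {E S T : Finset α} (h : Crosses E (S \ T)) : Crosses E S := by
  obtain ⟨⟨a, ha⟩, ⟨b, hb⟩⟩ := h
  simp only [Finset.mem_inter, Finset.mem_sdiff] at ha hb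
  exact ⟨⟨a, Finset.mem_inter.mpr ⟨ha.1.1, ha.2⟩⟩,
    ⟨b, Finset.mem_sdiff.mpr ⟨hb.1.1, hb.2⟩⟩⟩

lemma filter_crossers_sdiff (S T : Finset α) :
    (crossers S).filter (fun E => Crosses E (S \ T)) = crossers (S \ T) := by
  ext E
  simp only [Finset.mem_filter, crossers, Finset.mem_univ, true_and]
  exact ⟨fun h => h.2, fun h => ⟨crosses_of_crosses_sdiff h, h⟩⟩

/-- Lemma A: removing a point with minimal `ℓ` does not decrease `f`. -/
lemma fval_le_fval_sdiff_min {z : Finset α → ℝ} (hz : ∀ E, 0 ≤ z E) (hnd : Nondeg z)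
    {S : Finset α} {p : α} (hp : p ∈ S) (h2 : 2 ≤ S.card)
    (hmin : ∀ q ∈ S, ell z p ≤ ell z q) :
    fval z S ≤ fval z (S \ {p}) := by
  have hD := hnd S h2
  have hSp : (S \ {p}).Nonempty := by
    rw [← Finset.card_pos, Finset.card_sdiff_of_subset (Finset.singleton_subset_iff.mpr hp)]
    simp; omega
  -- termwise bound
  have hterm : ∀ E ∈ crossers S, z E * fval z (S \ E) ≤
      z E * (if Crosses E (S \ {p}) then fval z ((S \ {p}) \ E) else fval z (S \ {p})) := by
    intro E hE
    rcases (mem_crossers.mp hE) with ⟨hi, hd⟩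
    refine mul_le_mul_of_nonneg_left ?_ (hz E)
    by_cases hcr : Crosses E (S \ {p})
    · rw [if_pos hcr]
      by_cases hpE : p ∈ E
      · have heq : S \ E = (S \ {p}) \ E := by
          ext a
          simp only [Finset.mem_sdiff, Finset.mem_singleton]
          constructor
          · rintro ⟨ha, hae⟩; exact ⟨⟨ha, fun h => hae (h ▸ hpE)⟩, hae⟩
          · rintro ⟨⟨ha, -⟩, hae⟩; exact ⟨ha, hae⟩
        rw [heq]
      · have hps : p ∈ S \ E := Finset.mem_sdiff.mpr ⟨hp, hpE⟩
        obtain ⟨b, hb⟩ := hcr.2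
        simp only [Finset.mem_sdiff, Finset.mem_singleton] at hb
        have hb' : b ∈ S \ E := Finset.mem_sdiff.mpr ⟨hb.1.1, hb.2⟩
        have hcard2 : 2 ≤ (S \ E).card :=
          Finset.one_lt_card.mpr ⟨p, hps, b, hb', fun h => hb.1.2 h.symm⟩
        have heq : (S \ E) \ {p} = (S \ {p}) \ E := by
          ext a; simp only [Finset.mem_sdiff, Finset.mem_singleton]; tauto
        have := fval_le_fval_sdiff_min hz hnd hps hcard2
          (fun q hq => hmin q (Finset.mem_sdiff.mp hq).1)
        rwa [heq] at this
    · rw [if_neg hcr]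
      rw [Crosses, not_and_or, Finset.not_nonempty_iff_eq_empty,
        Finset.not_nonempty_iff_eq_empty, Finset.sdiff_eq_empty_iff_subset] at hcr
      rcases hcr with hint | hsub
      · -- (S \ {p}) ∩ E = ∅, so S \ E = S \ {p}
        rw [Finset.eq_empty_iff_forall_notMem] at hint
        have hSE : S \ E = S \ {p} := by
          ext a
          simp only [Finset.mem_sdiff, Finset.mem_singleton]
          constructor
          · rintro ⟨ha, hae⟩
            refine ⟨ha, fun hap => ?_⟩
            obtain ⟨c, hc⟩ := hi
            rcases Finset.mem_inter.mp hc with ⟨hcS, hcE⟩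
            rcases eq_or_ne c p with rfl | hcp
            · exact hae (hap ▸ hcE)
            · exact hint c (by simp only [Finset.mem_inter, Finset.mem_sdiff,
                Finset.mem_singleton]; exact ⟨⟨hcS, hcp⟩, hcE⟩)
          · rintro ⟨ha, hap⟩
            refine ⟨ha, fun hae => ?_⟩
            exact hint a (by simp only [Finset.mem_inter, Finset.mem_sdiff,
              Finset.mem_singleton]; exact ⟨⟨ha, hap⟩, hae⟩)
        rw [hSE]
      · -- S \ {p} ⊆ E, so S \ E = {p}
        have hpE : p ∉ E := by
          obtain ⟨c, hc⟩ := hd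
          rcases Finset.mem_sdiff.mp hc with ⟨hcS, hcE⟩
          rcases eq_or_ne c p with rfl | hcp
          · exact hcE
          · exact absurd (hsub (Finset.mem_sdiff.mpr ⟨hcS, by simp [hcp]⟩)) hcE
        have hSE : S \ E = {p} := by
          ext a
          simp only [Finset.mem_sdiff, Finset.mem_singleton]
          constructor
          · rintro ⟨haS, haE⟩
            by_contra hap
            exact haE (hsub (Finset.mem_sdiff.mpr ⟨haS, by simp [hap]⟩))
          · rintro rfl; exact ⟨hp, hpE⟩
        rw [hSE, fval_singleton]
        exact fval_ge hz hnd hSp (fun q hq => hmin q (Finset.mem_sdiff.mp hq).1)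
  -- aggregate
  have hnum : ∑ E ∈ crossers S, z E * fval z (S \ E) ≤
      (∑ E ∈ crossers S, z E) * fval z (S \ {p}) := by
    calc ∑ E ∈ crossers S, z E * fval z (S \ E)
        ≤ ∑ E ∈ crossers S, z E *
            (if Crosses E (S \ {p}) then fval z ((S \ {p}) \ E) else fval z (S \ {p})) :=
          Finset.sum_le_sum hterm
      _ = ∑ E ∈ (crossers S).filter (fun E => Crosses E (S \ {p})),
            z E * fval z ((S \ {p}) \ E)
          + ∑ E ∈ (crossers S).filter (fun E => ¬ Crosses E (S \ {p})),
            z E * fval z (S \ {p}) := by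
          rw [← Finset.sum_filter_add_sum_filter_not (crossers S)
            (fun E => Crosses E (S \ {p}))]
          congr 1
          · exact Finset.sum_congr rfl (fun E hE => by
              rw [if_pos (Finset.mem_filter.mp hE).2])
          · exact Finset.sum_congr rfl (fun E hE => by
              rw [if_neg (Finset.mem_filter.mp hE).2])
      _ = (∑ E ∈ crossers (S \ {p}), z E) * fval z (S \ {p})
          + (∑ E ∈ (crossers S).filter (fun E => ¬ Crosses E (S \ {p})), z E)
            * fval z (S \ {p}) := by
          rw [filter_crossers_sdiff, sum_crossers_eq hnd hSp, ← Finset.sum_mul]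
      _ = (∑ E ∈ crossers S, z E) * fval z (S \ {p}) := by
          rw [← add_mul]
          congr 1
          rw [← filter_crossers_sdiff S {p},
            Finset.sum_filter_add_sum_filter_not (crossers S)
              (fun E => Crosses E (S \ {p})) z]
  rw [fval_of_pos h2 hD, div_le_iff₀ hD]
  calc ∑ E ∈ crossers S, z E * fval z (S \ E)
      ≤ (∑ E ∈ crossers S, z E) * fval z (S \ {p}) := hnum
    _ = fval z (S \ {p}) * ∑ E ∈ crossers S, z E := mul_comm _ _
termination_by S.card
decreasing_by exact card_sdiff_lt_of_mem_crossers hE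

end LemA
section Deriv
variable {α : Type*} [Fintype α] [DecidableEq α]

/-- Indicator of the lifted coordinates. -/
noncomputable def chi (S' E : Finset α) : ℝ := if E.card = 1 ∧ E ⊆ S' then 1 else 0

omit [Fintype α] in
lemma chi_nonneg (S' E : Finset α) : 0 ≤ chi S' E := by
  unfold chi; split <;> norm_num

omit [Fintype α] in
lemma zlift_apply (z : Finset α → ℝ) (S' : Finset α) (t : ℝ) (E : Finset α) :
    zlift z S' t E = z E + t * chi S' E := by
  unfold zlift chi; split <;> simp [mul_comm]

omit [Fintype α] in
lemma zlift_zero (z : Finset α → ℝ) (S' : Finset α) : zlift z S' 0 = z := by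
  funext E; unfold zlift; split <;> simp

lemma sum_chi_filter (S' : Finset α) (p : α) :
    ∑ E ∈ univ.filter (fun E => p ∈ E), chi S' E = if p ∈ S' then 1 else 0 := by
  have h1 : ∀ E ∈ univ.filter (fun E : Finset α => p ∈ E),
      chi S' E = if E = {p} then (if p ∈ S' then (1:ℝ) else 0) else 0 := by
    intro E hE
    simp only [Finset.mem_filter, Finset.mem_univ, true_and] at hE
    by_cases h : E = {p}
    · subst h
      simp only [if_pos rfl]
      unfold chi
      simp [Finset.singleton_subset_iff]
    · rw [if_neg h]
      unfold chi
      rw [if_neg]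
      rintro ⟨h1, h2⟩
      obtain ⟨a, rfl⟩ := Finset.card_eq_one.mp h1
      exact h (by rw [Finset.mem_singleton.mp hE])
  rw [Finset.sum_congr rfl h1, Finset.sum_ite_eq' (univ.filter (fun E : Finset α => p ∈ E))
    ({p} : Finset α) (fun _ => if p ∈ S' then (1:ℝ) else 0),
    if_pos (by simp)]

lemma ell_zlift (z : Finset α → ℝ) (S' : Finset α) (t : ℝ) (p : α) :
    ell (zlift z S' t) p = ell z p + t * (if p ∈ S' then 1 else 0) := by
  unfold ell
  rw [← sum_chi_filter S' p, Finset.mul_sum, ← Finset.sum_add_distrib]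
  exact Finset.sum_congr rfl (fun E _ => zlift_apply z S' t E)

lemma fval_zlift_singleton (z : Finset α → ℝ) (S' : Finset α) (t : ℝ) (p : α) :
    fval (zlift z S' t) {p} = ell z p + t * (if p ∈ S' then 1 else 0) := by
  rw [fval_singleton, ell_zlift]

lemma sum_zlift (z : Finset α → ℝ) (S' : Finset α) (t : ℝ) (C : Finset (Finset α)) :
    ∑ E ∈ C, zlift z S' t E = (∑ E ∈ C, z E) + t * ∑ E ∈ C, chi S' E := by
  rw [Finset.mul_sum, ← Finset.sum_add_distrib]
  exact Finset.sum_congr rfl (fun E _ => zlift_apply z S' t E)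

/-- Key derivative lemma. -/
lemma key_deriv_s12 (z : Finset α → ℝ) (hz : ∀ E, 0 ≤ z E) (hnd : Nondeg z)
    (S' S : Finset α) (hS : S.Nonempty)
    (hmin : ∀ p ∈ S ∩ S', ∀ q ∈ S, ell z p ≤ ell z q) :
    ∃ d : ℝ, 0 ≤ d ∧ HasDerivAt (fun t : ℝ => fval (zlift z S' t) S) d 0 := by
  by_cases hc : S.card ≤ 1
  · obtain ⟨p, rfl⟩ := Finset.card_eq_one.mp (le_antisymm hc hS.card_pos)
    refine ⟨if p ∈ S' then 1 else 0, by split <;> norm_num, ?_⟩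
    have heq : (fun t : ℝ => fval (zlift z S' t) {p})
        = fun t : ℝ => ell z p + t * (if p ∈ S' then 1 else 0) :=
      funext (fun t => fval_zlift_singleton z S' t p)
    rw [heq]
    exact (hasDerivAt_mul_const _).const_add _
  · have h2 : 2 ≤ S.card := by omega
    have hD0 : 0 < ∑ E ∈ crossers S, z E := hnd S h2
    have hz0 := zlift_zero z S'
    -- derivatives of the sub-values
    have hderiv : ∀ E ∈ crossers S,
        HasDerivAt (fun t : ℝ => fval (zlift z S' t) (S \ E))
          (deriv (fun t : ℝ => fval (zlift z S' t) (S \ E)) 0) 0 ∧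
        0 ≤ deriv (fun t : ℝ => fval (zlift z S' t) (S \ E)) 0 := by
      intro E hE
      obtain ⟨d, hd0, hd⟩ := key_deriv_s12 z hz hnd S' (S \ E) (mem_crossers.mp hE).2
        (fun p hp q hq => hmin p
          (Finset.inter_subset_inter Finset.sdiff_subset le_rfl hp)
          q (Finset.sdiff_subset hq))
      rw [hd.deriv]
      exact ⟨hd, hd0⟩
    -- numerator and denominator derivatives
    have hN : HasDerivAt
        (fun t : ℝ => ∑ E ∈ crossers S,
          (z E + t * chi S' E) * fval (zlift z S' t) (S \ E))
        (∑ E ∈ crossers S,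
          (chi S' E * fval (zlift z S' 0) (S \ E)
            + (z E + 0 * chi S' E) * deriv (fun t : ℝ => fval (zlift z S' t) (S \ E)) 0)) 0 :=
      HasDerivAt.fun_sum (fun E hE =>
        ((hasDerivAt_mul_const (chi S' E)).const_add (z E)).mul (hderiv E hE).1)
    have hDf : HasDerivAt (fun t : ℝ => ∑ E ∈ crossers S, (z E + t * chi S' E))
        (∑ E ∈ crossers S, chi S' E) 0 :=
      HasDerivAt.fun_sum (fun E _ => (hasDerivAt_mul_const (chi S' E)).const_add (z E))
    have hDne : (∑ E ∈ crossers S, (z E + (0:ℝ) * chi S' E)) ≠ 0 := by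
      simpa using ne_of_gt hD0
    have hquot := hN.div hDf hDne
    -- eventual equality
    have hev : ∀ᶠ t in nhds (0:ℝ),
        0 < (∑ E ∈ crossers S, z E) + t * ∑ E ∈ crossers S, chi S' E := by
      have hcont : Continuous fun t : ℝ =>
          (∑ E ∈ crossers S, z E) + t * ∑ E ∈ crossers S, chi S' E := by continuity
      have hmem : Set.Ioi (0:ℝ) ∈ nhds
          ((∑ E ∈ crossers S, z E) + (0:ℝ) * ∑ E ∈ crossers S, chi S' E) :=
        isOpen_Ioi.mem_nhds (by simpa using hD0)
      exact hcont.continuousAt.preimage_mem_nhds hmem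
    have heq : (fun t : ℝ => fval (zlift z S' t) S) =ᶠ[nhds (0:ℝ)]
        (fun t : ℝ => (∑ E ∈ crossers S, (z E + t * chi S' E) * fval (zlift z S' t) (S \ E))
          / (∑ E ∈ crossers S, (z E + t * chi S' E))) := by
      refine hev.mono (fun t ht => ?_)
      have hDt : ∑ E ∈ crossers S, zlift z S' t E
          = (∑ E ∈ crossers S, z E) + t * ∑ E ∈ crossers S, chi S' E :=
        sum_zlift z S' t (crossers S)
      show fval (zlift z S' t) S
          = (∑ E ∈ crossers S, (z E + t * chi S' E) * fval (zlift z S' t) (S \ E))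
            / (∑ E ∈ crossers S, (z E + t * chi S' E))
      rw [fval_of_pos h2 (by rw [hDt]; exact ht)]
      congr 1
      · exact Finset.sum_congr rfl (fun E _ => by rw [zlift_apply])
      · exact Finset.sum_congr rfl (fun E _ => by rw [zlift_apply])
    have hfinal := hquot.congr_of_eventuallyEq heq
    refine ⟨_, ?_, hfinal⟩
    -- nonnegativity of the derivative
    refine div_nonneg ?_ (sq_nonneg _)
    rw [sub_nonneg]
    simp only [hz0, zero_mul, add_zero]
    rw [sum_crossers_eq hnd hS, Finset.sum_add_distrib]
    have hA : (∑ E ∈ crossers S, chi S' E) * fval z S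
        ≤ ∑ E ∈ crossers S, chi S' E * fval z (S \ E) := by
      rw [Finset.sum_mul]
      refine Finset.sum_le_sum (fun E hE => ?_)
      unfold chi
      split
      · rename_i hcond
        obtain ⟨a, rfl⟩ := Finset.card_eq_one.mp hcond.1
        have haS : a ∈ S := by
          obtain ⟨b, hb⟩ := (mem_crossers.mp hE).1
          rcases Finset.mem_inter.mp hb with ⟨hbS, hbE⟩
          exact (Finset.mem_singleton.mp hbE) ▸ hbS
        have haS' : a ∈ S' := hcond.2 (Finset.mem_singleton_self a)
        simpa using fval_le_fval_sdiff_min hz hnd haS h2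
          (hmin a (Finset.mem_inter.mpr ⟨haS, haS'⟩))
      · simp
    have hB : 0 ≤ ∑ E ∈ crossers S,
        z E * deriv (fun t : ℝ => fval (zlift z S' t) (S \ E)) 0 :=
      Finset.sum_nonneg (fun E hE => mul_nonneg (hz E) (hderiv E hE).2)
    calc (∑ E ∈ crossers S, z E) * fval z S * ∑ E ∈ crossers S, chi S' E
        = ((∑ E ∈ crossers S, chi S' E) * fval z S) * ∑ E ∈ crossers S, z E := by ring
      _ ≤ (∑ E ∈ crossers S, chi S' E * fval z (S \ E)
            + ∑ E ∈ crossers S,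
                z E * deriv (fun t : ℝ => fval (zlift z S' t) (S \ E)) 0)
            * ∑ E ∈ crossers S, z E := by
          refine mul_le_mul_of_nonneg_right ?_ (le_of_lt hD0)
          exact le_trans hA (le_add_of_nonneg_right hB)
termination_by S.card
decreasing_by exact card_sdiff_lt_of_mem_crossers hE

end Deriv

/-- derivatives of `f` along the lifting trajectory. -/
theorem stmt12 {α : Type*} [Fintype α] [DecidableEq α]
    (z : Finset α → ℝ) (hz : ∀ E : Finset α, 0 ≤ z E) (hnd : Nondeg z)
    (S' S : Finset α) (hS : S.Nonempty) :
    (S ∩ S' = ∅ → deriv (fun t : ℝ => fval (zlift z S' t) S) 0 = 0) ∧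
    (∀ p ∈ S', S = {p} → deriv (fun t : ℝ => fval (zlift z S' t) S) 0 = 1) ∧
    ((∀ p ∈ S ∩ S', ∀ q ∈ S, ell z p ≤ ell z q) →
      0 ≤ deriv (fun t : ℝ => fval (zlift z S' t) S) 0) := by
  refine ⟨?_, ?_, ?_⟩
  · intro hdisj
    have hconst : (fun t : ℝ => fval (zlift z S' t) S) = fun _ => fval z S := by
      funext t
      refine fval_congr _ _ _ (fun E hE => ?_)
      unfold zlift
      rw [if_neg]
      rintro ⟨h1, h2⟩
      obtain ⟨a, rfl⟩ := Finset.card_eq_one.mp h1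
      obtain ⟨b, hb⟩ := hE
      rcases Finset.mem_inter.mp hb with ⟨hbE, hbS⟩
      have haS' : a ∈ S' := h2 (Finset.mem_singleton_self a)
      have : a ∈ S ∩ S' := Finset.mem_inter.mpr
        ⟨(Finset.mem_singleton.mp hbE) ▸ hbS, haS'⟩
      rw [hdisj] at this
      exact absurd this (Finset.notMem_empty a)
    rw [hconst, deriv_const]
  · intro p hp hSp
    subst hSp
    have heq : (fun t : ℝ => fval (zlift z S' t) {p}) = fun t : ℝ => ell z p + t * 1 := by
      funext t
      rw [fval_zlift_singleton, if_pos hp]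
    rw [heq]
    have hd : HasDerivAt (fun t : ℝ => ell z p + t * 1) 1 0 :=
      (hasDerivAt_mul_const (1:ℝ)).const_add (ell z p)
    exact hd.deriv
  · intro hmin
    obtain ⟨d, hd0, hd⟩ := key_deriv_s12 z hz hnd S' S hS hmin
    rw [hd.deriv]
    exact hd0
end
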